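/- Let G be a strongly connected directed graph with all distances between distinct vertices at most 2, and let V1, V2 ⊆ V(G) be disjoint nonempty vertex sets such that (x,y) ∈ E(G) for every x ∈ V1, y ∈ V2, while (y,x) ∉ E(G) for every y ∈ V2, x ∈ V1. Let R1 ⊆ V1 resolve V1 in G and R2 ⊆ V2 resolve V2 in G, both nonempty. If V1 has no 1-vertex w.r.t. R1 or V2 has no 2-vertex w.r.t. R2, then R1 ∪ R2 resolves V1 ∪ V2 in G. -/
import Mathlib


universe u

/-- There is a directed walk of length `n` from `u` to `v` in the digraph
with edge relation `E`. -/
def HasWalkLen {V : Type u} (E : V → V → Prop) (u v : V) (n : ℕ) : Prop :=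
  ∃ f : Fin (n + 1) → V, f 0 = u ∧ f (Fin.last n) = v ∧
    ∀ i : Fin n, E (f i.castSucc) (f i.succ)

/-- `v` is reachable from `u` by a directed walk. -/
def Reaches {V : Type u} (E : V → V → Prop) (u v : V) : Prop :=
  ∃ n, HasWalkLen E u v n

/-- Directed distance from `u` to `v` (length of a shortest directed path);
a junk value (`sInf ∅ = 0`) if `v` is unreachable from `u`. -/
noncomputable def ddist {V : Type u} (E : V → V → Prop) (u v : V) : ℕ :=
  sInf {n | HasWalkLen E u v n}

/-- `w` resolves the vertices `u` and `v`: `w = u`, or `w = v`, or both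
distances from `w` are defined (reachable) and different. -/
def Resolves {V : Type u} (E : V → V → Prop) (w u v : V) : Prop :=
  w = u ∨ w = v ∨
    (Reaches E w u ∧ Reaches E w v ∧ ddist E w u ≠ ddist E w v)

/-- `R` resolves the vertex set `U`: every pair of distinct vertices of `U`
is resolved by some member of `R`. -/
def ResolvesSet {V : Type u} (E : V → V → Prop) (R U : Set V) : Prop :=
  ∀ u ∈ U, ∀ v ∈ U, u ≠ v → ∃ w ∈ R, Resolves E w u v

/-- The digraph is strongly connected on the vertex set `S`. -/
def SConn {V : Type u} (E : V → V → Prop) (S : Set V) : Prop :=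
  ∀ u ∈ S, ∀ v ∈ S, Reaches E u v

/-- `u` is a 1-vertex w.r.t. `R`: `u ∉ R` and every `w ∈ R` has an edge to `u`. -/
def OneVertex {V : Type u} (E : V → V → Prop) (R : Set V) (u : V) : Prop :=
  u ∉ R ∧ ∀ w ∈ R, E w u

/-- `u` is a 2-vertex w.r.t. `R`: `u ∉ R` and no `w ∈ R` has an edge to `u`. -/
def TwoVertex {V : Type u} (E : V → V → Prop) (R : Set V) (u : V) : Prop :=
  u ∉ R ∧ ∀ w ∈ R, ¬ E w u

/-- Directed co-graphs with vertex set `S` and edge relation `E`, built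
inductively from single vertices by disjoint union, join and directed join. -/
inductive IsDicograph {V : Type u} : Set V → (V → V → Prop) → Prop
  | single (v : V) : IsDicograph {v} fun _ _ => False
  | disjUnion {S₁ S₂ : Set V} {E₁ E₂ : V → V → Prop} :
      IsDicograph S₁ E₁ → IsDicograph S₂ E₂ → Disjoint S₁ S₂ →
      IsDicograph (S₁ ∪ S₂) fun u v => E₁ u v ∨ E₂ u v
  | join {S₁ S₂ : Set V} {E₁ E₂ : V → V → Prop} :
      IsDicograph S₁ E₁ → IsDicograph S₂ E₂ → Disjoint S₁ S₂ →
      IsDicograph (S₁ ∪ S₂) fun u v =>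
        E₁ u v ∨ E₂ u v ∨ (u ∈ S₁ ∧ v ∈ S₂) ∨ (u ∈ S₂ ∧ v ∈ S₁)
  | dirJoin {S₁ S₂ : Set V} {E₁ E₂ : V → V → Prop} :
      IsDicograph S₁ E₁ → IsDicograph S₂ E₂ → Disjoint S₁ S₂ →
      IsDicograph (S₁ ∪ S₂) fun u v => E₁ u v ∨ E₂ u v ∨ (u ∈ S₁ ∧ v ∈ S₂)

lemma hasWalkLen_zero_iff {V : Type u} {E : V → V → Prop} {u v : V} :
    HasWalkLen E u v 0 ↔ u = v := by
  constructor
  · rintro ⟨f, h0, hl, -⟩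
    rw [← h0, ← hl]
    rfl
  · rintro rfl
    exact ⟨fun _ => u, rfl, rfl, fun i => i.elim0⟩

lemma hasWalkLen_one_iff {V : Type u} {E : V → V → Prop} {u v : V} :
    HasWalkLen E u v 1 ↔ E u v := by
  constructor
  · rintro ⟨f, h0, hl, hstep⟩
    have := hstep 0
    rw [show (Fin.castSucc (0 : Fin 1)) = 0 from rfl,
      show (Fin.succ (0 : Fin 1)) = Fin.last 1 from rfl, h0, hl] at this
    exact this
  · intro h
    refine ⟨![u, v], rfl, rfl, fun i => ?_⟩
    fin_cases i
    simpa using h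

lemma ddist_eq_one {V : Type u} {E : V → V → Prop} {w v : V}
    (hne : w ≠ v) (he : E w v) : ddist E w v = 1 := by
  have h1 : (1 : ℕ) ∈ {n | HasWalkLen E w v n} := hasWalkLen_one_iff.mpr he
  have hmem := Nat.sInf_mem ⟨1, h1⟩
  have hle := Nat.sInf_le h1
  have h0 : sInf {n | HasWalkLen E w v n} ≠ 0 := fun h => by
    rw [h] at hmem; exact hne (hasWalkLen_zero_iff.mp hmem)
  unfold ddist
  omega

lemma ddist_eq_two {V : Type u} {E : V → V → Prop} {w v : V}
    (hr : Reaches E w v) (hne : w ≠ v) (hnoe : ¬ E w v)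
    (hle : ddist E w v ≤ 2) : ddist E w v = 2 := by
  obtain ⟨n, hn⟩ := hr
  have hmem := Nat.sInf_mem (⟨n, hn⟩ : {m | HasWalkLen E w v m}.Nonempty)
  have h0 : sInf {n | HasWalkLen E w v n} ≠ 0 := fun h => by
    rw [h] at hmem; exact hne (hasWalkLen_zero_iff.mp hmem)
  have h1 : sInf {n | HasWalkLen E w v n} ≠ 1 := fun h => by
    rw [h] at hmem; exact hnoe (hasWalkLen_one_iff.mp hmem)
  unfold ddist at hle ⊢
  omega

/-- Directed join case: if the left side has no 1-vertex or the right side has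
no 2-vertex, the union of the two resolving sets resolves the union. -/
theorem stmt_7 {V : Type u} {E : V → V → Prop}
    (hsc : SConn E Set.univ)
    (hdiam : ∀ u v : V, u ≠ v → ddist E u v ≤ 2)
    {V₁ V₂ R₁ R₂ : Set V}
    (hdisj : Disjoint V₁ V₂) (hV₁ : V₁.Nonempty) (hV₂ : V₂.Nonempty)
    (hforward : ∀ x ∈ V₁, ∀ y ∈ V₂, E x y)
    (hback : ∀ y ∈ V₂, ∀ x ∈ V₁, ¬ E y x)
    (hR₁ : R₁ ⊆ V₁) (hR₂ : R₂ ⊆ V₂)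
    (hR₁ne : R₁.Nonempty) (hR₂ne : R₂.Nonempty)
    (hres₁ : ResolvesSet E R₁ V₁) (hres₂ : ResolvesSet E R₂ V₂)
    (hv : (¬ ∃ u ∈ V₁, OneVertex E R₁ u) ∨ (¬ ∃ u ∈ V₂, TwoVertex E R₂ u)) :
    ResolvesSet E (R₁ ∪ R₂) (V₁ ∪ V₂) := by
  have hreach : ∀ x y : V, Reaches E x y :=
    fun x y => hsc x (Set.mem_univ x) y (Set.mem_univ y)
  have hcross : ∀ a ∈ V₁, ∀ b ∈ V₂, ∃ w ∈ R₁ ∪ R₂, Resolves E w a b := by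
    intro a ha b hb
    rcases hv with h1 | h2
    · by_cases haR : a ∈ R₁
      · exact ⟨a, Or.inl haR, Or.inl rfl⟩
      · push_neg at h1
        have hno := h1 a ha
        rw [OneVertex] at hno
        push_neg at hno
        obtain ⟨w, hwR, hwe⟩ := hno haR
        have hwV1 : w ∈ V₁ := hR₁ hwR
        have hwa : w ≠ a := fun h => haR (h ▸ hwR)
        have hwb : w ≠ b := fun h => Set.disjoint_left.mp hdisj hwV1 (h ▸ hb)
        have d1 : ddist E w b = 1 := ddist_eq_one hwb (hforward w hwV1 b hb)
        have d2 : ddist E w a = 2 :=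
          ddist_eq_two (hreach w a) hwa hwe (hdiam w a hwa)
        exact ⟨w, Or.inl hwR, Or.inr (Or.inr ⟨hreach w a, hreach w b, by
          rw [d1, d2]; omega⟩)⟩
    · by_cases hbR : b ∈ R₂
      · exact ⟨b, Or.inr hbR, Or.inr (Or.inl rfl)⟩
      · push_neg at h2
        have hno := h2 b hb
        rw [TwoVertex] at hno
        push_neg at hno
        obtain ⟨w, hwR, hwe⟩ := hno hbR
        have hwV2 : w ∈ V₂ := hR₂ hwR
        have hwb : w ≠ b := fun h => hbR (h ▸ hwR)
        have hwa : w ≠ a := fun h => Set.disjoint_right.mp hdisj hwV2 (h ▸ ha)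
        have d1 : ddist E w b = 1 := ddist_eq_one hwb hwe
        have d2 : ddist E w a = 2 :=
          ddist_eq_two (hreach w a) hwa (hback w hwV2 a ha) (hdiam w a hwa)
        exact ⟨w, Or.inr hwR, Or.inr (Or.inr ⟨hreach w a, hreach w b, by
          rw [d1, d2]; omega⟩)⟩
  intro a ha b hb hab
  rcases ha with ha | ha <;> rcases hb with hb | hb
  · obtain ⟨w, hw, hres⟩ := hres₁ a ha b hb hab
    exact ⟨w, Or.inl hw, hres⟩
  · exact hcross a ha b hb
  · obtain ⟨w, hw, hres⟩ := hcross b hb a ha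
    refine ⟨w, hw, ?_⟩
    rcases hres with h | h | ⟨r1, r2, hd⟩
    · exact Or.inr (Or.inl h)
    · exact Or.inl h
    · exact Or.inr (Or.inr ⟨r2, r1, hd.symm⟩)
  · obtain ⟨w, hw, hres⟩ := hres₂ a ha b hb hab
    exact ⟨w, Or.inr hw, hres⟩
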